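/- Let S : ℝ² → ℂ and u : ℝ → ℂ be functions, fix (ω_x, ω_y) ∈ ℝ², and let A_s ≥ 0, A_ψ ≥ 0, C_s ≥ 0. Assume: ∑_{p∈ℤ} |u(ω_x + 2pπ)|² = 1 and ∑_{q∈ℤ} |u(ω_y + 2qπ)|² = 1; |S(ω_x, ω_y)| ≥ A_s; |u(ω_x)| ≥ A_ψ and |u(ω_y)| ≥ A_ψ; and ∑_{(p,q)∈ℤ², (p,q)≠(0,0)} |S(ω_x + 2pπ, ω_y + 2qπ)|² ≤ C_s. Then the family (S(ω_x + 2pπ, ω_y + 2qπ)·conj(u(ω_x + 2pπ))·conj(u(ω_y + 2qπ)))_{(p,q)∈ℤ²} is summable and its sum F₁(ω_x, ω_y) satisfies |F₁(ω_x, ω_y)| ≥ A_s·A_ψ² − √C_s. -/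

import Mathlib

open Real

set_option maxHeartbeats 1000000

/-- Lower bound on the prefilter frequency response `F₁` (Appendix C of the
paper, part of Proposition 5), obtained by isolating the `(p,q) = (0,0)` term
and bounding the remainder via Cauchy–Schwarz. -/
theorem stmt_16 (S : ℝ × ℝ → ℂ) (u : ℝ → ℂ) (ωx ωy : ℝ) (As Aψ Cs : ℝ)
    (hAs : 0 ≤ As) (hAψ : 0 ≤ Aψ) (hCs : 0 ≤ Cs)
    (hux : HasSum (fun p : ℤ => ‖u (ωx + 2 * p * π)‖ ^ 2) 1)
    (huy : HasSum (fun q : ℤ => ‖u (ωy + 2 * q * π)‖ ^ 2) 1)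
    (hS0 : As ≤ ‖S (ωx, ωy)‖)
    (hux0 : Aψ ≤ ‖u ωx‖) (huy0 : Aψ ≤ ‖u ωy‖)
    (hStail : ∃ c : ℝ, c ≤ Cs ∧ HasSum (fun pq : ℤ × ℤ =>
      if pq = (0, 0) then 0
      else ‖S (ωx + 2 * pq.1 * π, ωy + 2 * pq.2 * π)‖ ^ 2) c) :
    ∃ F₁ : ℂ, HasSum (fun pq : ℤ × ℤ =>
        S (ωx + 2 * pq.1 * π, ωy + 2 * pq.2 * π) *
          (starRingEnd ℂ) (u (ωx + 2 * pq.1 * π)) *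
          (starRingEnd ℂ) (u (ωy + 2 * pq.2 * π))) F₁ ∧
      As * Aψ ^ 2 - Real.sqrt Cs ≤ ‖F₁‖ := by
  obtain ⟨c, hcCs, hc⟩ := hStail
  set a : ℤ × ℤ → ℂ := fun pq =>
    S (ωx + 2 * pq.1 * π, ωy + 2 * pq.2 * π) *
      (starRingEnd ℂ) (u (ωx + 2 * pq.1 * π)) *
      (starRingEnd ℂ) (u (ωy + 2 * pq.2 * π)) with ha
  -- weight function
  set w : ℤ × ℤ → ℝ := fun pq =>
    ‖u (ωx + 2 * pq.1 * π)‖ * ‖u (ωy + 2 * pq.2 * π)‖ with hw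
  set fS : ℤ × ℤ → ℝ := fun pq =>
    if pq = (0, 0) then 0
    else ‖S (ωx + 2 * pq.1 * π, ωy + 2 * pq.2 * π)‖ with hfS
  have hwnn : ∀ pq, 0 ≤ w pq := fun pq => mul_nonneg (norm_nonneg _) (norm_nonneg _)
  have hfSnn : ∀ pq, 0 ≤ fS pq := by
    intro pq; simp only [hfS]
    split
    · exact le_refl 0
    · exact norm_nonneg _
  -- sum of w^2 is 1
  have hw2 : HasSum (fun pq : ℤ × ℤ => w pq ^ 2) 1 := by
    have hs : Summable fun pq : ℤ × ℤ =>
        (‖u (ωx + 2 * pq.1 * π)‖ ^ 2) * (‖u (ωy + 2 * pq.2 * π)‖ ^ 2) :=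
      hux.summable.mul_of_nonneg huy.summable (fun p => sq_nonneg _) (fun q => sq_nonneg _)
    have := hux.mul huy hs
    rw [one_mul] at this
    refine (congrArg (fun f : ℤ × ℤ → ℝ => HasSum f 1) (funext fun pq => ?_)).mpr this
    simp [hw, mul_pow]
  -- sum of fS^2 is c
  have hfS2 : HasSum (fun pq : ℤ × ℤ => fS pq ^ 2) c := by
    convert hc using 2 with pq
    by_cases h : pq = (0, 0) <;> simp [hfS, h]
  -- g = fS * w is summable
  have hgsum : Summable (fun pq : ℤ × ℤ => fS pq * w pq) := by
    apply Summable.of_nonneg_of_le (fun pq => mul_nonneg (hfSnn pq) (hwnn pq))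
      (fun pq => ?_) (((hfS2.summable.add hw2.summable).div_const 2))
    have := sq_nonneg (fS pq - w pq)
    simp only [sub_sq] at this
    nlinarith [hfSnn pq, hwnn pq]
  -- tsum g ≤ √Cs via finite Cauchy-Schwarz
  have hgle : ∑' pq, fS pq * w pq ≤ Real.sqrt Cs := by
    apply hgsum.tsum_le_of_sum_le
    intro s
    have hCS := Finset.sum_mul_sq_le_sq_mul_sq s fS w
    have h1 : ∑ i ∈ s, fS i ^ 2 ≤ Cs :=
      le_trans (sum_le_hasSum s (fun i _ => sq_nonneg _) hfS2) hcCs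
    have h2 : ∑ i ∈ s, w i ^ 2 ≤ 1 := sum_le_hasSum s (fun i _ => sq_nonneg _) hw2
    have hnn : 0 ≤ ∑ i ∈ s, fS i * w i :=
      Finset.sum_nonneg fun i _ => mul_nonneg (hfSnn i) (hwnn i)
    nlinarith [Real.sq_sqrt hCs, Real.sqrt_nonneg Cs, Finset.sum_nonneg (fun i (_ : i ∈ s) => sq_nonneg (fS i)), Finset.sum_nonneg (fun i (_ : i ∈ s) => sq_nonneg (w i))]
  -- norm of a
  have hnorm : ∀ pq : ℤ × ℤ, ‖a pq‖ =
      ‖S (ωx + 2 * pq.1 * π, ωy + 2 * pq.2 * π)‖ * w pq := by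
    intro pq
    simp [ha, hw, map_mul, mul_assoc]
  have hnorm' : ∀ pq : ℤ × ℤ, pq ≠ (0, 0) → ‖a pq‖ = fS pq * w pq := by
    intro pq h; rw [hnorm]; simp only [hfS]; rw [if_neg h]
  -- a is summable
  have hasum : Summable a := by
    apply Summable.of_norm
    have : Summable (fun pq : ℤ × ℤ => fS pq * w pq +
        (if pq = (0, 0) then ‖a (0, 0)‖ else 0)) :=
      hgsum.add (summable_of_ne_finset_zero (s := {(0, 0)}) (by
        intro pq h
        rw [Finset.mem_singleton] at h
        rw [if_neg h]))
    apply this.of_nonneg_of_le (fun pq => norm_nonneg _)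
    intro pq
    by_cases h : pq = (0, 0)
    · subst h
      rw [if_pos rfl]
      have : fS (0, 0) = 0 := by simp [hfS]
      rw [this, zero_mul, zero_add]
    · rw [hnorm' pq h, if_neg h, add_zero]
  obtain ⟨F₁, hF₁⟩ := hasum
  refine ⟨F₁, hF₁, ?_⟩
  -- split off the (0,0) term
  have h00 : HasSum (fun pq : ℤ × ℤ => if pq = (0, 0) then a pq else 0) (a (0, 0)) := by
    convert hasSum_ite_eq ((0, 0) : ℤ × ℤ) (a (0, 0)) using 2 with pq
    by_cases h : pq = (0, 0)
    · subst h; simp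
    · rw [if_neg h, if_neg h]
  have htail : HasSum (fun pq : ℤ × ℤ => if pq = (0, 0) then 0 else a pq) (F₁ - a (0, 0)) := by
    have := hF₁.sub h00
    refine (congrArg (fun f : ℤ × ℤ → ℂ => HasSum f (F₁ - a (0, 0))) (funext fun pq => ?_)).mpr this
    by_cases h : pq = (0, 0)
    · rw [if_pos h, if_pos h, sub_self]
    · rw [if_neg h, if_neg h, sub_zero]
  -- bound tail
  have htailnorm : ‖F₁ - a (0, 0)‖ ≤ Real.sqrt Cs := by
    rw [← htail.tsum_eq]
    have hle : ∀ pq : ℤ × ℤ,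
        ‖if pq = (0, 0) then (0 : ℂ) else a pq‖ ≤ fS pq * w pq := by
      intro pq
      by_cases h : pq = (0, 0)
      · rw [if_pos h, norm_zero]
        exact mul_nonneg (hfSnn pq) (hwnn pq)
      · rw [if_neg h]
        exact le_of_eq (hnorm' pq h)
    have hsumn : Summable (fun pq : ℤ × ℤ => ‖if pq = (0, 0) then (0 : ℂ) else a pq‖) :=
      hgsum.of_nonneg_of_le (fun pq => norm_nonneg _) hle
    refine le_trans (norm_tsum_le_tsum_norm hsumn) ?_
    exact le_trans (Summable.tsum_le_tsum hle hsumn hgsum) hgle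
  -- lower bound on the (0,0) term
  have h00lb : As * Aψ ^ 2 ≤ ‖a (0, 0)‖ := by
    have : a (0, 0) = S (ωx, ωy) * (starRingEnd ℂ) (u ωx) * (starRingEnd ℂ) (u ωy) := by
      simp [ha]
    rw [this]
    simp only [norm_mul, Complex.norm_conj]
    calc As * Aψ ^ 2 = As * Aψ * Aψ := by ring
    _ ≤ ‖S (ωx, ωy)‖ * ‖u ωx‖ * ‖u ωy‖ := by
        apply mul_le_mul _ huy0 hAψ (mul_nonneg (norm_nonneg _) (norm_nonneg _))
        exact mul_le_mul hS0 hux0 hAψ (norm_nonneg _)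
  -- conclude
  have htri : ‖a (0, 0)‖ ≤ ‖F₁‖ + ‖F₁ - a (0, 0)‖ := by
    calc ‖a (0, 0)‖ = ‖F₁ - (F₁ - a (0, 0))‖ := by ring_nf
    _ ≤ ‖F₁‖ + ‖F₁ - a (0, 0)‖ := norm_sub_le _ _
  have : ‖F₁‖ = ‖F₁‖ := rfl
  rw [this]
  linarith
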